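/- arXiv:2510.17859 — 2 statements merged into one kernel-verified Lean document; each statement's English description precedes it below -/
import Mathlib

section
/- Monotone comparison principle for the embedded system implies soundness of interval over-approximation: suppose g : ℝⁿ × ℝⁿ → ℝⁿ satisfies g(x, x) = f(x), and suppose the embedded flow Φ_h of h(x, x̂) = (g(x, x̂), g(x̂, x)) preserves the southeast order (x ≤ x', x̂' ≤ x̂ implies the first components of Φ_h satisfy the same order relation and similarly inverted for second components). Then for any initial condition u with x̲₀ ≤ u ≤ x̄₀ componentwise, the solution x(t) of ẋ = f(x), x(0) = u, satisfies α(t) ≤ x(t) ≤ β(t) for all t ≥ 0, where (α, β) solves the embedded system with (α(0), β(0)) = (x̲₀, x̄₀). -/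
open Set Real

/-- Monotone comparison principle for the embedded mixed-monotone system. -/
theorem embedded_flow_interval_sound (n : ℕ)
    (f : (Fin n → ℝ) → (Fin n → ℝ)) (g : (Fin n → ℝ) → (Fin n → ℝ) → (Fin n → ℝ))
    (K : NNReal) (hg : LipschitzWith K (fun p : (Fin n → ℝ) × (Fin n → ℝ) => g p.1 p.2))
    (hdiag : ∀ x, g x x = f x)
    (Φ : ℝ → (Fin n → ℝ) × (Fin n → ℝ) → (Fin n → ℝ) × (Fin n → ℝ))
    (hΦ0 : ∀ p, Φ 0 p = p)
    (hΦode : ∀ p, ∀ t : ℝ, 0 ≤ t →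
      HasDerivAt (fun s => Φ s p) (g (Φ t p).1 (Φ t p).2, g (Φ t p).2 (Φ t p).1) t)
    (hmono : ∀ t : ℝ, 0 ≤ t → ∀ p q : (Fin n → ℝ) × (Fin n → ℝ),
      p.1 ≤ q.1 → q.2 ≤ p.2 → (Φ t p).1 ≤ (Φ t q).1 ∧ (Φ t q).2 ≤ (Φ t p).2)
    (xlo xhi u : Fin n → ℝ) (hu : xlo ≤ u ∧ u ≤ xhi)
    (x : ℝ → (Fin n → ℝ)) (hx0 : x 0 = u)
    (hxode : ∀ t : ℝ, 0 ≤ t → HasDerivAt x (f (x t)) t) :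
    ∀ t : ℝ, 0 ≤ t →
      (Φ t (xlo, xhi)).1 ≤ x t ∧ x t ≤ (Φ t (xlo, xhi)).2 := by
  intro t ht
  -- vector field of the embedded system
  set v : ℝ → ((Fin n → ℝ) × (Fin n → ℝ)) → ((Fin n → ℝ) × (Fin n → ℝ)) :=
    fun _ p => (g p.1 p.2, g p.2 p.1) with hv_def
  have hvlip : ∀ s : ℝ, LipschitzWith K (v s) := by
    intro s
    have h2 : LipschitzWith K (fun p : (Fin n → ℝ) × (Fin n → ℝ) => g p.2 p.1) := by
      have hswap : LipschitzWith 1 (fun p : (Fin n → ℝ) × (Fin n → ℝ) => (p.2, p.1)) := by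
        simpa using (LipschitzWith.prod_snd.prodMk LipschitzWith.prod_fst :
          LipschitzWith (1 ⊔ 1) fun p : (Fin n → ℝ) × (Fin n → ℝ) => (p.2, p.1))
      simpa [Function.comp_def] using (hg.comp hswap)
    simpa [hv_def] using hg.prodMk h2
  -- the diagonal solution agrees with the flow from (u, u)
  have key : ∀ s ∈ Icc (0:ℝ) t, Φ s (u, u) = (x s, x s) := by
    have hF : ∀ s ∈ Ico (0:ℝ) t,
        HasDerivWithinAt (fun s => Φ s (u, u)) (v s (Φ s (u, u))) (Ici s) s :=
      fun s hs => ((hΦode (u, u) s hs.1).hasDerivWithinAt)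
    have hG : ∀ s ∈ Ico (0:ℝ) t,
        HasDerivWithinAt (fun s => (x s, x s)) (v s (x s, x s)) (Ici s) s := by
      intro s hs
      have hx := hxode s hs.1
      have : HasDerivAt (fun s => (x s, x s)) (f (x s), f (x s)) s := hx.prodMk hx
      simpa [hv_def, hdiag] using this.hasDerivWithinAt
    have hFc : ContinuousOn (fun s => Φ s (u, u)) (Icc 0 t) := by
      intro s hs
      exact ((hΦode (u, u) s hs.1).continuousAt).continuousWithinAt
    have hGc : ContinuousOn (fun s => (x s, x s)) (Icc 0 t) := by
      intro s hs
      exact (((hxode s hs.1).prodMk (hxode s hs.1)).continuousAt).continuousWithinAt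
    have h0 : Φ 0 (u, u) = (x 0, x 0) := by simp [hΦ0, hx0]
    exact ODE_solution_unique hvlip hFc hF hGc hG h0
  have hdiagval : Φ t (u, u) = (x t, x t) := key t ⟨ht, le_rfl⟩
  have h1 := hmono t ht (xlo, xhi) (u, u) hu.1 hu.2
  rw [hdiagval] at h1
  exact h1
end

section
/- Soundness of the sampled-data mixed monotonicity bound for sign-stable sensitivity: let Φ : ℝⁿ → ℝⁿ be continuously differentiable and suppose there is a sign pattern σ : Fin n × Fin n → {±1} such that σ(i,j) · ∂Φ_i/∂u_j(u) ≥ 0 for all u in the box [u̲, ū]. Define g_i(x, x̂) = Φ_i(ξ_i) where ξ_i^j = x_j if σ(i,j) = +1 and ξ_i^j = x̂_j otherwise. Then for every u ∈ [u̲, ū] (componentwise), g(u̲, ū) ≤ Φ(u) ≤ g(ū, u̲) componentwise. -/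
/-- Soundness of the sampled-data mixed monotonicity bound under sign-stable sensitivity. -/
theorem sampled_data_mm_sound (n : ℕ) (Φ : (Fin n → ℝ) → (Fin n → ℝ))
    (ulo uhi : Fin n → ℝ) (hbox : ulo ≤ uhi)
    (U : Set (Fin n → ℝ)) (hU : IsOpen U) (hsub : Set.Icc ulo uhi ⊆ U)
    (hΦ : ContDiffOn ℝ 1 Φ U)
    (σ : Fin n → Fin n → ℝ) (hσ : ∀ i j, σ i j = 1 ∨ σ i j = -1)
    (hsign : ∀ u ∈ Set.Icc ulo uhi, ∀ i j,
      0 ≤ σ i j * fderiv ℝ Φ u (Pi.single j 1) i) :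
    ∀ u ∈ Set.Icc ulo uhi, ∀ i,
      Φ (fun j => if σ i j = 1 then ulo j else uhi j) i ≤ Φ u i
        ∧ Φ u i ≤ Φ (fun j => if σ i j = 1 then uhi j else ulo j) i := by
  intro u hu i
  have hu1 : ∀ k, ulo k ≤ u k := fun k => hu.1 k
  have hu2 : ∀ k, u k ≤ uhi k := fun k => hu.2 k
  set ξhi : Fin n → ℝ := fun j => if σ i j = 1 then uhi j else ulo j with hξhi
  set ξlo : Fin n → ℝ := fun j => if σ i j = 1 then ulo j else uhi j with hξlo
  -- key one-coordinate monotonicity lemma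
  have hkey : ∀ v ∈ Set.Icc ulo uhi, ∀ j : Fin n, ∀ a ∈ Set.Icc (ulo j) (uhi j),
      ∀ b ∈ Set.Icc (ulo j) (uhi j),
      ((σ i j = 1 ∧ a ≤ b) ∨ (σ i j = -1 ∧ b ≤ a)) →
      Φ (Function.update v j a) i ≤ Φ (Function.update v j b) i := by
    intro v hv j a ha b hb hcase
    set h : ℝ → ℝ := fun t => Φ (Function.update v j t) i with hh
    have hmem : ∀ t ∈ Set.Icc (ulo j) (uhi j),
        Function.update v j t ∈ Set.Icc ulo uhi := by
      intro t ht
      constructor <;> intro k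
      · by_cases hk : k = j
        · subst hk; simpa using ht.1
        · simpa [Function.update, hk] using hv.1 k
      · by_cases hk : k = j
        · subst hk; simpa using ht.2
        · simpa [Function.update, hk] using hv.2 k
    have hder : ∀ t ∈ Set.Icc (ulo j) (uhi j),
        HasDerivAt h (fderiv ℝ Φ (Function.update v j t) (Pi.single j 1) i) t := by
      intro t ht
      have hdiffAt : DifferentiableAt ℝ Φ (Function.update v j t) :=
        (hΦ.differentiableOn one_ne_zero).differentiableAt (hU.mem_nhds (hsub (hmem t ht)))
      have hF : HasFDerivAt Φ (fderiv ℝ Φ (Function.update v j t))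
          (Function.update v j t) := hdiffAt.hasFDerivAt
      have hupd : HasDerivAt (fun r : ℝ => Function.update v j r)
          ((Pi.single j 1 : Fin n → ℝ)) t := by
        have heq : (fun r : ℝ => Function.update v j r)
            = fun r : ℝ => Function.update v j 0 + r • (Pi.single j 1 : Fin n → ℝ) := by
          funext r k
          by_cases hk : k = j
          · subst hk; simp [Function.update_self, Pi.single_apply]
          · simp [Function.update, hk, Pi.single_apply]
        rw [heq]
        simpa using ((hasDerivAt_id t).smul_const (Pi.single j (1:ℝ))).const_add
          (Function.update v j 0)
      have hcomp := hF.comp_hasDerivAt t hupd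
      exact (ContinuousLinearMap.proj i :
        (Fin n → ℝ) →L[ℝ] ℝ).hasFDerivAt.comp_hasDerivAt t hcomp
    have hcont : ContinuousOn h (Set.Icc (ulo j) (uhi j)) := fun t ht =>
      ((hder t ht).continuousAt).continuousWithinAt
    have hdiffI : DifferentiableOn ℝ h (interior (Set.Icc (ulo j) (uhi j))) := by
      intro t ht
      exact ((hder t (interior_subset ht)).differentiableAt).differentiableWithinAt
    rcases hcase with ⟨hσ1, hab⟩ | ⟨hσ2, hba⟩
    · have hmono : MonotoneOn h (Set.Icc (ulo j) (uhi j)) := by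
        apply monotoneOn_of_deriv_nonneg (convex_Icc _ _) hcont hdiffI
        intro t ht
        have ht' := interior_subset ht
        rw [(hder t ht').deriv]
        have := hsign _ (hmem t ht') i j
        rw [hσ1, one_mul] at this
        exact this
      exact hmono ha hb hab
    · have hmono : AntitoneOn h (Set.Icc (ulo j) (uhi j)) := by
        apply antitoneOn_of_deriv_nonpos (convex_Icc _ _) hcont hdiffI
        intro t ht
        have ht' := interior_subset ht
        rw [(hder t ht').deriv]
        have := hsign _ (hmem t ht') i j
        rw [hσ2] at this
        linarith
      exact hmono hb ha hba
  have hξhi_mem : ∀ j, ξhi j ∈ Set.Icc (ulo j) (uhi j) := by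
    intro j; by_cases h1 : σ i j = 1 <;> simp [hξhi, h1, le_refl, hbox j]
  have hξlo_mem : ∀ j, ξlo j ∈ Set.Icc (ulo j) (uhi j) := by
    intro j; by_cases h1 : σ i j = 1 <;> simp [hξlo, h1, le_refl, hbox j]
  have hu_mem : ∀ j, u j ∈ Set.Icc (ulo j) (uhi j) := fun j => ⟨hu1 j, hu2 j⟩
  -- upper bound by induction over changed coordinates
  have hi_claim : ∀ s : Finset (Fin n),
      Φ u i ≤ Φ (fun j => if j ∈ s then ξhi j else u j) i := by
    intro s
    induction s using Finset.induction_on with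
    | empty => simp
    | @insert a s has ih =>
      set w : Fin n → ℝ := fun j => if j ∈ s then ξhi j else u j with hw
      have hwbox : w ∈ Set.Icc ulo uhi := by
        constructor <;> intro k <;> by_cases hk : k ∈ s <;>
          simp [hw, hk, (hξhi_mem k).1, (hξhi_mem k).2, hu1 k, hu2 k]
      have hwa : w a = u a := by simp [hw, has]
      have h1 : Function.update w a (u a) = w := by
        rw [← hwa]; exact Function.update_eq_self a w
      have h2 : Function.update w a (ξhi a)
          = fun j => if j ∈ insert a s then ξhi j else u j := by
        funext k
        by_cases hk : k = a
        · subst hk; simp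
        · simp [Function.update, hk, hw, Finset.mem_insert]
      have hcase : (σ i a = 1 ∧ u a ≤ ξhi a) ∨ (σ i a = -1 ∧ ξhi a ≤ u a) := by
        rcases hσ i a with h1' | h1'
        · exact Or.inl ⟨h1', by simp [hξhi, h1', hu2 a]⟩
        · refine Or.inr ⟨h1', ?_⟩
          have : ¬ σ i a = 1 := by rw [h1']; norm_num
          simp [hξhi, this, hu1 a]
      have := hkey w hwbox a (u a) (hu_mem a) (ξhi a) (hξhi_mem a) hcase
      rw [h1, h2] at this
      exact le_trans ih this
  -- lower bound
  have lo_claim : ∀ s : Finset (Fin n),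
      Φ (fun j => if j ∈ s then ξlo j else u j) i ≤ Φ u i := by
    intro s
    induction s using Finset.induction_on with
    | empty => simp
    | @insert a s has ih =>
      set w : Fin n → ℝ := fun j => if j ∈ s then ξlo j else u j with hw
      have hwbox : w ∈ Set.Icc ulo uhi := by
        constructor <;> intro k <;> by_cases hk : k ∈ s <;>
          simp [hw, hk, (hξlo_mem k).1, (hξlo_mem k).2, hu1 k, hu2 k]
      have hwa : w a = u a := by simp [hw, has]
      have h1 : Function.update w a (u a) = w := by
        rw [← hwa]; exact Function.update_eq_self a w
      have h2 : Function.update w a (ξlo a)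
          = fun j => if j ∈ insert a s then ξlo j else u j := by
        funext k
        by_cases hk : k = a
        · subst hk; simp
        · simp [Function.update, hk, hw, Finset.mem_insert]
      have hcase : (σ i a = 1 ∧ ξlo a ≤ u a) ∨ (σ i a = -1 ∧ u a ≤ ξlo a) := by
        rcases hσ i a with h1' | h1'
        · exact Or.inl ⟨h1', by simp [hξlo, h1', hu1 a]⟩
        · refine Or.inr ⟨h1', ?_⟩
          have : ¬ σ i a = 1 := by rw [h1']; norm_num
          simp [hξlo, this, hu2 a]
      have := hkey w hwbox a (ξlo a) (hξlo_mem a) (u a) (hu_mem a) hcase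
      rw [h1, h2] at this
      exact le_trans this ih
  constructor
  · have := lo_claim Finset.univ
    simpa [hξlo] using this
  · have := hi_claim Finset.univ
    simpa [hξhi] using this
end
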